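/- Let α : ℝ^{d-1} → ℝ be continuously differentiable with bounded gradient, and define F : ℝ^d → ℂ by F(x', x_d) := e^{-i α(x') x_d} - 1 + i α(x') x_d. Then for all x = (x', x_d) with x_d ≥ 0, the Euclidean norm of the gradient of F satisfies |∇F(x)| ≤ |α(x')| x_d · sqrt(‖α‖_∞² + ‖∇'α‖_∞² x_d²), where ‖α‖_∞ and ‖∇'α‖_∞ denote the supremum norms of α and of its gradient. -/

import Mathlib

open Complex

lemma aux_exp_I_sub_one_le (t : ℝ) : ‖Complex.exp (t * I) - 1‖ ≤ |t| := by
  have h : Complex.exp (t * I) - 1 =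
      ((Real.cos t - 1 : ℝ) : ℂ) + ((Real.sin t : ℝ) : ℂ) * I := by
    rw [Complex.exp_mul_I]
    push_cast [← Complex.ofReal_cos, ← Complex.ofReal_sin]
    ring
  rw [h]
  rw [Complex.norm_add_mul_I]
  have h1 : (Real.cos t - 1) ^ 2 + Real.sin t ^ 2 = 2 - 2 * Real.cos t := by
    have := Real.sin_sq_add_cos_sq t; nlinarith
  rw [h1, ← Real.sqrt_sq_eq_abs]
  apply Real.sqrt_le_sqrt
  have := Real.one_sub_sq_div_two_le_cos (x := t)
  nlinarith

lemma aux_cs (a b p q : ℝ) (ha : 0 ≤ a) (hb : 0 ≤ b) (hp : 0 ≤ p) (hq : 0 ≤ q) :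
    a * q + b * p ≤ Real.sqrt (a ^ 2 + b ^ 2) * Real.sqrt (p ^ 2 + q ^ 2) := by
  set s := Real.sqrt (a ^ 2 + b ^ 2) with hs
  set u := Real.sqrt (p ^ 2 + q ^ 2) with hu
  have hs2 : s ^ 2 = a ^ 2 + b ^ 2 := Real.sq_sqrt (by positivity)
  have hu2 : u ^ 2 = p ^ 2 + q ^ 2 := Real.sq_sqrt (by positivity)
  have hsn : 0 ≤ s := Real.sqrt_nonneg _
  have hun : 0 ≤ u := Real.sqrt_nonneg _
  nlinarith [sq_nonneg (a * p - b * q), sq_nonneg (s * u - a * q - b * p), mul_nonneg hsn hun]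

/-- Estimate (2.12): for `F(x', x_d) = e^{-i α(x') x_d} - 1 + i α(x') x_d` on the
Euclidean product `ℝ^{d-1} ×₂ ℝ`, and `x_d ≥ 0`,
`|∇F(x)| ≤ |α(x')| x_d √(‖α‖_∞² + ‖∇'α‖_∞² x_d²)`. -/
theorem stmt_2 (n : ℕ) (α : EuclideanSpace ℝ (Fin n) → ℝ)
    (hα : ContDiff ℝ 1 α) (Mα Mg : ℝ)
    (hMα : ∀ y, |α y| ≤ Mα) (hMg : ∀ y, ‖fderiv ℝ α y‖ ≤ Mg)
    (F : WithLp 2 (EuclideanSpace ℝ (Fin n) × ℝ) → ℂ)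
    (hF : ∀ x : WithLp 2 (EuclideanSpace ℝ (Fin n) × ℝ),
      F x = Complex.exp (-Complex.I * α x.ofLp.1 * x.ofLp.2) - 1 + Complex.I * α x.ofLp.1 * x.ofLp.2)
    (x : WithLp 2 (EuclideanSpace ℝ (Fin n) × ℝ)) (hx : 0 ≤ x.ofLp.2) :
    ‖fderiv ℝ F x‖ ≤ |α x.ofLp.1| * x.ofLp.2 * Real.sqrt (Mα ^ 2 + Mg ^ 2 * x.ofLp.2 ^ 2) := by
  have hα1' : HasFDerivAt α (fderiv ℝ α x.ofLp.1) x.ofLp.1 :=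
    (hα.differentiable one_ne_zero x.ofLp.1).hasFDerivAt
  set g := fderiv ℝ α x.ofLp.1 with hg
  set e : WithLp 2 (EuclideanSpace ℝ (Fin n) × ℝ) ≃L[ℝ] EuclideanSpace ℝ (Fin n) × ℝ := WithLp.prodContinuousLinearEquiv 2 ℝ (EuclideanSpace ℝ (Fin n)) ℝ with he
  set fst' := (ContinuousLinearMap.fst ℝ (EuclideanSpace ℝ (Fin n)) ℝ).comp e.toContinuousLinearMap with hfst'
  set snd' := (ContinuousLinearMap.snd ℝ (EuclideanSpace ℝ (Fin n)) ℝ).comp e.toContinuousLinearMap with hsnd'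
  set L₀ := α x.ofLp.1 • snd' + x.ofLp.2 • (g.comp fst') with hL₀
  set c : ℂ := (1 - Complex.exp (-I * α x.ofLp.1 * x.ofLp.2)) * I with hc
  set D := c • (Complex.ofRealCLM.comp L₀) with hD
  -- derivative computation
  have hfst : HasFDerivAt (fun y : WithLp 2 (EuclideanSpace ℝ (Fin n) × ℝ) => y.ofLp.1) fst' x := fst'.hasFDerivAt
  have hsnd : HasFDerivAt (fun y : WithLp 2 (EuclideanSpace ℝ (Fin n) × ℝ) => y.ofLp.2) snd' x := snd'.hasFDerivAt
  have hα1 : HasFDerivAt α g x.ofLp.1 := hα1'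
  have hcomp : HasFDerivAt (fun y : WithLp 2 (EuclideanSpace ℝ (Fin n) × ℝ) => α y.ofLp.1) (g.comp fst') x :=
    hα1.comp x hfst
  have hA : HasFDerivAt (fun y : WithLp 2 (EuclideanSpace ℝ (Fin n) × ℝ) => α y.ofLp.1 * y.ofLp.2) L₀ x := hcomp.mul hsnd
  have hAc : HasFDerivAt (fun y : WithLp 2 (EuclideanSpace ℝ (Fin n) × ℝ) => ((α y.ofLp.1 * y.ofLp.2 : ℝ) : ℂ))
      (Complex.ofRealCLM.comp L₀) x :=
    Complex.ofRealCLM.hasFDerivAt.comp x hA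
  have hB : HasFDerivAt (fun y : WithLp 2 (EuclideanSpace ℝ (Fin n) × ℝ) => -I * α y.ofLp.1 * y.ofLp.2)
      ((-I) • (Complex.ofRealCLM.comp L₀)) x := by
    have := hAc.const_mul (-I)
    have e : (fun y : WithLp 2 (EuclideanSpace ℝ (Fin n) × ℝ) => -I * α y.ofLp.1 * y.ofLp.2) =
        (fun y => -I * ((α y.ofLp.1 * y.ofLp.2 : ℝ) : ℂ)) := by
      funext y; push_cast; ring
    rw [e]; exact this
  have hexp : HasFDerivAt (fun y : WithLp 2 (EuclideanSpace ℝ (Fin n) × ℝ) => Complex.exp (-I * α y.ofLp.1 * y.ofLp.2))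
      (Complex.exp (-I * α x.ofLp.1 * x.ofLp.2) • ((-I) • (Complex.ofRealCLM.comp L₀))) x := hB.cexp
  have hIA : HasFDerivAt (fun y : WithLp 2 (EuclideanSpace ℝ (Fin n) × ℝ) => I * α y.ofLp.1 * y.ofLp.2)
      (I • (Complex.ofRealCLM.comp L₀)) x := by
    have := hAc.const_mul I
    have e : (fun y : WithLp 2 (EuclideanSpace ℝ (Fin n) × ℝ) => I * α y.ofLp.1 * y.ofLp.2) =
        (fun y => I * ((α y.ofLp.1 * y.ofLp.2 : ℝ) : ℂ)) := by
      funext y; push_cast; ring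
    rw [e]; exact this
  have hFd : HasFDerivAt F D x := by
    have h := ((hexp.sub_const 1).add hIA)
    have hFe : F = fun y : WithLp 2 (EuclideanSpace ℝ (Fin n) × ℝ) => (Complex.exp (-I * α y.ofLp.1 * y.ofLp.2) - 1) + I * α y.ofLp.1 * y.ofLp.2 :=
      funext hF
    rw [hFe]
    have hDe : D = Complex.exp (-I * α x.ofLp.1 * x.ofLp.2) • ((-I) • (Complex.ofRealCLM.comp L₀))
        + I • (Complex.ofRealCLM.comp L₀) := by
      rw [hD, hc]
      ext v
      simp only [ContinuousLinearMap.add_apply, ContinuousLinearMap.smul_apply, smul_eq_mul]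
      ring
    rw [hDe]
    exact h
  have : ContinuousSMul ℝ (WithLp 2 (EuclideanSpace ℝ (Fin n) × ℝ)) := inferInstance
  rw [hFd.fderiv]
  -- norm bound
  have hMα0 : 0 ≤ Mα := le_trans (abs_nonneg _) (hMα x.ofLp.1)
  have hMg0 : 0 ≤ Mg := le_trans (norm_nonneg _) (hMg x.ofLp.1)
  have hcb : ‖c‖ ≤ |α x.ofLp.1| * x.ofLp.2 := by
    have h1 : c = -(Complex.exp (((-(α x.ofLp.1 * x.ofLp.2) : ℝ) : ℂ) * I) - 1) * I := by
      rw [hc]; push_cast; ring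
    rw [h1]
    rw [norm_mul, norm_neg, Complex.norm_I, mul_one]
    calc ‖Complex.exp (((-(α x.ofLp.1 * x.ofLp.2) : ℝ) : ℂ) * I) - 1‖ ≤ |(-(α x.ofLp.1 * x.ofLp.2))| :=
          aux_exp_I_sub_one_le _
      _ = |α x.ofLp.1| * x.ofLp.2 := by rw [abs_neg, abs_mul, _root_.abs_of_nonneg hx]
  apply ContinuousLinearMap.opNorm_le_bound
  · positivity
  intro v
  have hDv : ‖D v‖ = ‖c‖ * |L₀ v| := by
    simp [hD, Complex.norm_real, Real.norm_eq_abs]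
  rw [hDv]
  have hL₀v : |L₀ v| ≤ Mα * |v.ofLp.2| + (Mg * x.ofLp.2) * ‖v.ofLp.1‖ := by
    have h1 : L₀ v = α x.ofLp.1 * v.ofLp.2 + x.ofLp.2 * g v.ofLp.1 := by
      simp only [hL₀, ContinuousLinearMap.add_apply, ContinuousLinearMap.smul_apply,
        smul_eq_mul]
      rfl
    rw [h1]
    calc |α x.ofLp.1 * v.ofLp.2 + x.ofLp.2 * g v.ofLp.1| ≤ |α x.ofLp.1 * v.ofLp.2| + |x.ofLp.2 * g v.ofLp.1| := abs_add_le _ _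
      _ = |α x.ofLp.1| * |v.ofLp.2| + x.ofLp.2 * |g v.ofLp.1| := by
          rw [abs_mul, abs_mul, _root_.abs_of_nonneg hx]
      _ ≤ Mα * |v.ofLp.2| + x.ofLp.2 * (Mg * ‖v.ofLp.1‖) := by
          gcongr
          · exact hMα _
          · calc |g v.ofLp.1| ≤ ‖g‖ * ‖v.ofLp.1‖ := g.le_opNorm v.ofLp.1
              _ ≤ Mg * ‖v.ofLp.1‖ := by gcongr; exact hMg _
      _ = Mα * |v.ofLp.2| + (Mg * x.ofLp.2) * ‖v.ofLp.1‖ := by ring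
  have hnv : ‖v‖ = Real.sqrt (‖v.ofLp.1‖ ^ 2 + ‖v.ofLp.2‖ ^ 2) := WithLp.prod_norm_eq_of_L2 v
  have hcs : Mα * |v.ofLp.2| + (Mg * x.ofLp.2) * ‖v.ofLp.1‖ ≤
      Real.sqrt (Mα ^ 2 + (Mg * x.ofLp.2) ^ 2) * Real.sqrt (‖v.ofLp.1‖ ^ 2 + |v.ofLp.2| ^ 2) :=
    aux_cs Mα (Mg * x.ofLp.2) ‖v.ofLp.1‖ |v.ofLp.2| hMα0 (by positivity) (norm_nonneg _) (abs_nonneg _)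
  have hsq : Real.sqrt (Mα ^ 2 + (Mg * x.ofLp.2) ^ 2) = Real.sqrt (Mα ^ 2 + Mg ^ 2 * x.ofLp.2 ^ 2) := by
    ring_nf
  have hnv2 : Real.sqrt (‖v.ofLp.1‖ ^ 2 + |v.ofLp.2| ^ 2) = ‖v‖ := by
    rw [hnv, Real.norm_eq_abs]
  calc ‖c‖ * |L₀ v| ≤ (|α x.ofLp.1| * x.ofLp.2) * (Real.sqrt (Mα ^ 2 + Mg ^ 2 * x.ofLp.2 ^ 2) * ‖v‖) := by
        apply mul_le_mul hcb _ (abs_nonneg _) (by positivity)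
        calc |L₀ v| ≤ Mα * |v.ofLp.2| + (Mg * x.ofLp.2) * ‖v.ofLp.1‖ := hL₀v
          _ ≤ Real.sqrt (Mα ^ 2 + (Mg * x.ofLp.2) ^ 2) * Real.sqrt (‖v.ofLp.1‖ ^ 2 + |v.ofLp.2| ^ 2) := hcs
          _ = Real.sqrt (Mα ^ 2 + Mg ^ 2 * x.ofLp.2 ^ 2) * ‖v‖ := by rw [hsq, hnv2]
    _ = |α x.ofLp.1| * x.ofLp.2 * Real.sqrt (Mα ^ 2 + Mg ^ 2 * x.ofLp.2 ^ 2) * ‖v‖ := by ring
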